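/- Let f : ℝ^d → ℝ be twice continuously differentiable with L_H-Lipschitz continuous Hessian. Let x ∈ ℝ^d, g = ∇f(x), H = ∇²f(x), and suppose d ∈ ℝ^d is a unit vector (‖d‖ = 1) with ⟨d, g⟩ ≤ 0 and ⟨d, Hd⟩ ≤ −ε_H/2 for some ε_H > 0. Let 0 < ρ < 1. Then every step-size α with 0 < α ≤ 3(1 − ρ)ε_H/(2L_H) satisfies f(x + αd) ≤ f(x) + (ρα²/2)⟨d, Hd⟩; consequently, with α* = 3(1 − ρ)ε_H/(2L_H), one has f(x + α*d) ≤ f(x) − (9ρ(1 − ρ)²/(16L_H²))·ε_H³. -/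

import Mathlib

set_option maxHeartbeats 1000000


open scoped RealInnerProductSpace

/-- The Hessian of `f : ℝ^d → ℝ` at `x`, as the derivative of the gradient. -/
noncomputable def hessian {d : ℕ} (f : EuclideanSpace ℝ (Fin d) → ℝ)
    (x : EuclideanSpace ℝ (Fin d)) :
    EuclideanSpace ℝ (Fin d) →L[ℝ] EuclideanSpace ℝ (Fin d) :=
  fderiv ℝ (gradient f) x

/-- 1D Taylor-type inequality from a derivative bound on the second derivative. -/
lemma taylor1d (g g1 g2 : ℝ → ℝ) (h1 : ∀ t, HasDerivAt g (g1 t) t)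
    (h2 : ∀ t, HasDerivAt g1 (g2 t) t) (L : ℝ)
    (hL : ∀ t : ℝ, 0 ≤ t → g2 t ≤ g2 0 + L * t) (α : ℝ) (hα : 0 ≤ α) :
    g α ≤ g 0 + α * g1 0 + α ^ 2 / 2 * g2 0 + L * α ^ 3 / 6 := by
  set ψ1 : ℝ → ℝ := fun t => g1 t - g1 0 - t * g2 0 - L * t ^ 2 / 2 with hψ1
  set ψ : ℝ → ℝ := fun t => g t - g 0 - t * g1 0 - t ^ 2 / 2 * g2 0 - L * t ^ 3 / 6 with hψ
  have hψ1' : ∀ t, HasDerivAt ψ1 (g2 t - g2 0 - L * t) t := by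
    intro t
    have : HasDerivAt (fun t : ℝ => g1 t - g1 0 - t * g2 0 - L * t ^ 2 / 2)
        (g2 t - 0 - (1 * g2 0) - L * (2 * t ^ 1) / 2) t := by
      exact ((((h2 t).sub (hasDerivAt_const t (g1 0))).sub
        ((hasDerivAt_id t).mul_const (g2 0))).sub
        (((hasDerivAt_pow 2 t).const_mul L).div_const 2))
    convert this using 1 <;> ring
  have hψ' : ∀ t, HasDerivAt ψ (ψ1 t) t := by
    intro t
    have : HasDerivAt (fun t : ℝ => g t - g 0 - t * g1 0 - t ^ 2 / 2 * g2 0 - L * t ^ 3 / 6)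
        (g1 t - 0 - 1 * g1 0 - (2 * t ^ 1) / 2 * g2 0 - L * (3 * t ^ 2) / 6) t := by
      exact (((((h1 t).sub (hasDerivAt_const t (g 0))).sub
        ((hasDerivAt_id t).mul_const (g1 0))).sub
        (((hasDerivAt_pow 2 t).div_const 2).mul_const (g2 0))).sub
        (((hasDerivAt_pow 3 t).const_mul L).div_const 6))
    convert this using 1
    simp [hψ1]; ring
  have hψ1anti : AntitoneOn ψ1 (Set.Ici (0 : ℝ)) := by
    apply antitoneOn_of_deriv_nonpos (convex_Ici 0)
    · exact fun t _ => (hψ1' t).continuousAt.continuousWithinAt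
    · exact fun t _ => (hψ1' t).differentiableAt.differentiableWithinAt
    · intro t ht
      rw [interior_Ici] at ht
      rw [(hψ1' t).deriv]
      have := hL t (le_of_lt ht)
      linarith
  have hψ1nonpos : ∀ t ∈ Set.Ici (0 : ℝ), ψ1 t ≤ 0 := by
    intro t ht
    have := hψ1anti (Set.mem_Ici.mpr le_rfl) ht ht
    simpa [hψ1] using this
  have hψanti : AntitoneOn ψ (Set.Ici (0 : ℝ)) := by
    apply antitoneOn_of_deriv_nonpos (convex_Ici 0)
    · exact fun t _ => (hψ' t).continuousAt.continuousWithinAt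
    · exact fun t _ => (hψ' t).differentiableAt.differentiableWithinAt
    · intro t ht
      rw [interior_Ici] at ht
      rw [(hψ' t).deriv]
      exact hψ1nonpos t (Set.mem_Ici.mpr (le_of_lt ht))
  have := hψanti (Set.mem_Ici.mpr le_rfl) (Set.mem_Ici.mpr hα) hα
  simp only [hψ] at this
  nlinarith [this]

/-- Line-search guarantee and worst-case decrease for a unit direction of sufficiently
negative curvature. -/
theorem negative_curvature_decrease {d : ℕ} (f : EuclideanSpace ℝ (Fin d) → ℝ)
    (LH ρ εH : ℝ) (hLH : 0 < LH) (hρ0 : 0 < ρ) (hρ1 : ρ < 1) (hεH : 0 < εH)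
    (hf : ContDiff ℝ 2 f)
    (hLip : ∀ x y : EuclideanSpace ℝ (Fin d), ‖hessian f x - hessian f y‖ ≤ LH * ‖x - y‖)
    (x v : EuclideanSpace ℝ (Fin d)) (hunit : ‖v‖ = 1)
    (hdg : ⟪v, gradient f x⟫ ≤ 0)
    (hcurv : ⟪v, hessian f x v⟫ ≤ -εH / 2) :
    (∀ α : ℝ, 0 < α → α ≤ 3 * (1 - ρ) * εH / (2 * LH) →
      f (x + α • v) ≤ f x + ρ * α ^ 2 / 2 * ⟪v, hessian f x v⟫) ∧
    f (x + (3 * (1 - ρ) * εH / (2 * LH)) • v) ≤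
      f x - 9 * ρ * (1 - ρ) ^ 2 / (16 * LH ^ 2) * εH ^ 3 := by
  have hfd : Differentiable ℝ f := hf.differentiable (by norm_num)
  have hgradC : ContDiff ℝ 1 (gradient f) := by
    have hfderiv : ContDiff ℝ 1 (fderiv ℝ f) := hf.fderiv_right (le_refl _)
    exact ((InnerProductSpace.toDual ℝ (EuclideanSpace ℝ (Fin d))).symm.toContinuousLinearEquiv.contDiff).comp hfderiv
  have hgradD : Differentiable ℝ (gradient f) := hgradC.differentiable (by norm_num)
  -- curve
  set c : ℝ → EuclideanSpace ℝ (Fin d) := fun t => x + t • v with hc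
  have hcD : ∀ t, HasDerivAt c v t := by
    intro t
    have : HasDerivAt (fun t : ℝ => x + t • v) ((1 : ℝ) • v) t :=
      (((hasDerivAt_id t).smul_const v).const_add x)
    rw [one_smul] at this; exact this
  set g : ℝ → ℝ := fun t => f (c t) with hg
  set g1 : ℝ → ℝ := fun t => ⟪gradient f (c t), v⟫ with hg1
  set g2 : ℝ → ℝ := fun t => ⟪hessian f (c t) v, v⟫ with hg2
  have key1 : ∀ z : EuclideanSpace ℝ (Fin d), (fderiv ℝ f z) v = ⟪gradient f z, v⟫ := by
    intro z
    rw [gradient]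
    rw [InnerProductSpace.toDual_symm_apply]
  have h1 : ∀ t, HasDerivAt g (g1 t) t := by
    intro t
    have := (hfd (c t)).hasFDerivAt.comp_hasDerivAt t (hcD t)
    rw [key1] at this; exact this
  have hgradcurve : ∀ t, HasDerivAt (fun t => gradient f (c t)) (hessian f (c t) v) t := by
    intro t
    exact ((hgradD (c t)).hasFDerivAt).comp_hasDerivAt t (hcD t)
  have h2 : ∀ t, HasDerivAt g1 (g2 t) t := by
    intro t
    have := HasDerivAt.inner ℝ (hgradcurve t) (hasDerivAt_const t v)
    simpa [hg1, hg2] using this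
  have hLipg2 : ∀ t : ℝ, 0 ≤ t → g2 t ≤ g2 0 + LH * t := by
    intro t ht
    have hsub : g2 t - g2 0 = ⟪(hessian f (c t) - hessian f x) v, v⟫ := by
      simp [hg2, hc, ContinuousLinearMap.sub_apply, inner_sub_left]
    have habs : |g2 t - g2 0| ≤ LH * t := by
      rw [hsub]
      calc |⟪(hessian f (c t) - hessian f x) v, v⟫| ≤ ‖(hessian f (c t) - hessian f x) v‖ * ‖v‖ :=
            abs_real_inner_le_norm _ _
        _ ≤ ‖hessian f (c t) - hessian f x‖ * ‖v‖ * ‖v‖ := by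
            gcongr
            exact ContinuousLinearMap.le_opNorm _ _
        _ = ‖hessian f (c t) - hessian f x‖ := by rw [hunit]; ring
        _ ≤ LH * ‖c t - x‖ := hLip _ _
        _ = LH * t := by
            simp [hc, norm_smul, hunit, abs_of_nonneg ht]
    nlinarith [abs_le.mp habs]
  -- main Taylor bound, Q := g2 0
  have hg20 : g2 0 = ⟪v, hessian f x v⟫ := by
    simp only [hg2, hc, zero_smul, add_zero]
    exact real_inner_comm _ _
  have hg10 : g1 0 ≤ 0 := by
    have : g1 0 = ⟪v, gradient f x⟫ := by
      simp only [hg1, hc, zero_smul, add_zero]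
      exact real_inner_comm _ _
    rw [this]; exact hdg
  have main : ∀ α : ℝ, 0 < α → α ≤ 3 * (1 - ρ) * εH / (2 * LH) →
      f (x + α • v) ≤ f x + ρ * α ^ 2 / 2 * ⟪v, hessian f x v⟫ := by
    intro α hα0 hαle
    have htay := taylor1d g g1 g2 h1 h2 LH hLipg2 α (le_of_lt hα0)
    have hg0 : g 0 = f x := by simp [hg, hc]
    have hgα : g α = f (x + α • v) := by simp [hg, hc]
    rw [hg0, hgα, hg20] at htay
    -- LH * α³/6 ≤ -(1-ρ) * α²/2 * Q
    have hQ : ⟪v, hessian f x v⟫ ≤ -εH / 2 := hcurv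
    have hstep : LH * α ^ 3 / 6 ≤ -(1 - ρ) * α ^ 2 / 2 * ⟪v, hessian f x v⟫ := by
      have h1' : LH * α / 3 ≤ (1 - ρ) * εH / 2 := by
        rw [div_le_iff₀ (by norm_num : (0:ℝ) < 3)]
        calc LH * α ≤ LH * (3 * (1 - ρ) * εH / (2 * LH)) := by
              exact mul_le_mul_of_nonneg_left hαle (le_of_lt hLH)
          _ = (1 - ρ) * εH / 2 * 3 := by field_simp
      have h2' : (1 - ρ) * εH / 2 ≤ -(1 - ρ) * ⟪v, hessian f x v⟫ := by nlinarith
      nlinarith [sq_nonneg α, mul_pos hα0 hα0]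
    nlinarith [mul_nonpos_of_nonneg_of_nonpos (le_of_lt hα0) hg10]
  refine ⟨main, ?_⟩
  set α := 3 * (1 - ρ) * εH / (2 * LH) with hα
  have hαpos : 0 < α := by
    apply div_pos
    · nlinarith
    · linarith
  have := main α hαpos (le_refl _)
  have hQ : ⟪v, hessian f x v⟫ ≤ -εH / 2 := hcurv
  have hfinal : f x + ρ * α ^ 2 / 2 * ⟪v, hessian f x v⟫ ≤
      f x - 9 * ρ * (1 - ρ) ^ 2 / (16 * LH ^ 2) * εH ^ 3 := by
    have hα2 : α ^ 2 = 9 * (1 - ρ) ^ 2 * εH ^ 2 / (4 * LH ^ 2) := by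
      rw [hα]; field_simp; ring
    have h1' : ρ * α ^ 2 / 2 * ⟪v, hessian f x v⟫ ≤ ρ * α ^ 2 / 2 * (-εH / 2) := by
      apply mul_le_mul_of_nonneg_left hQ
      positivity
    have h2' : ρ * α ^ 2 / 2 * (-εH / 2) = -(9 * ρ * (1 - ρ) ^ 2 / (16 * LH ^ 2) * εH ^ 3) := by
      rw [hα2]; field_simp; ring
    linarith
  linarith
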